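/- arXiv:2212.07654 — 5 statements merged into one kernel-verified Lean document; each statement's English description precedes it below -/
import Mathlib

section
/- For every p ∈ [1,∞] there exists a constant C > 0, depending only on p and on the wave strength ω₊ − ω₋, such that for all δ > 0 and all t ≥ 0 one has ‖∂_xω(t,·)‖_{L^p(ℝ)} ≤ C·(δ + t)^{−1 + 1/p}, where we set 1/p := 0 when p = ∞ and the L^p norm is taken with respect to Lebesgue measure on ℝ. -/
open MeasureTheory Filter

lemma my_hasDerivAt_tanh (x : ℝ) : HasDerivAt Real.tanh (1 / Real.cosh x ^ 2) x := by
  have h := (Real.hasDerivAt_sinh x).div (Real.hasDerivAt_cosh x) (Real.cosh_pos x).ne'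
  have heq : (Real.sinh / Real.cosh) = Real.tanh :=
    funext fun y => (Real.tanh_eq_sinh_div_cosh y).symm
  rw [heq] at h
  refine h.congr_deriv ?_
  congr 1
  nlinarith [Real.cosh_sq_sub_sinh_sq x]

lemma my_tanh_le_one (x : ℝ) : Real.tanh x ≤ 1 := by
  rw [Real.tanh_eq_sinh_div_cosh, div_le_one (Real.cosh_pos x)]
  exact (Real.sinh_lt_cosh x).le

lemma my_neg_one_le_tanh (x : ℝ) : -1 ≤ Real.tanh x := by
  rw [Real.tanh_eq_sinh_div_cosh, le_div_iff₀ (Real.cosh_pos x)]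
  nlinarith [Real.cosh_add_sinh x, Real.exp_pos x]


/-- `L^p` decay of the spatial derivative of the smooth approximate rarefaction wave:
`‖∂_xω(t,·)‖_{L^p(ℝ)} ≤ C (δ+t)^{-1+1/p}` with `C` depending only on `p` and on the
wave strength `s = ω₊ − ω₋`, uniformly in `δ > 0` and `t ≥ 0`.  (With the convention
`1/p = 0` when `p = ∞`, which in Lean is automatic since `(⊤ : ℝ≥0∞).toReal = 0`.) -/
theorem burgers_deriv_Lp_bound
    (p : ENNReal) (hp : 1 ≤ p) (s : ℝ) (hs : 0 < s) :
    ∃ C : ℝ, 0 < C ∧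
      ∀ ωm ωp : ℝ, ωm < ωp → ωp - ωm = s →
      ∀ δ : ℝ, 0 < δ →
      ∀ g : ℝ → ℝ,
        (∀ x : ℝ, g x = (ωp + ωm) / 2 + ((ωp - ωm) / 2) * Real.tanh (x / δ)) →
      ∀ Y : ℝ → ℝ → ℝ,
        (∀ t : ℝ, 0 ≤ t →
          Function.LeftInverse (Y t) (fun y : ℝ => y + t * g y) ∧
          Function.RightInverse (Y t) (fun y : ℝ => y + t * g y)) →
      ∀ ω : ℝ → ℝ → ℝ, (∀ t x : ℝ, ω t x = g (Y t x)) →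
      ∀ t : ℝ, 0 ≤ t →
        eLpNorm (fun x : ℝ => deriv (fun z : ℝ => ω t z) x) p volume
          ≤ ENNReal.ofReal (C * (δ + t) ^ (-1 + 1 / p.toReal)) := by
  set C0 : ℝ := max (s / 2) 1 with hC0def
  set s1 : ℝ := max s 1 with hs1def
  have hC0 : 1 ≤ C0 := le_max_right _ _
  have hC0s : s / 2 ≤ C0 := le_max_left _ _
  have hs1 : 1 ≤ s1 := le_max_right _ _
  have hss1 : s ≤ s1 := le_max_left _ _
  have hC0pos : 0 < C0 := lt_of_lt_of_le one_pos hC0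
  have hs1pos : 0 < s1 := lt_of_lt_of_le one_pos hs1
  refine ⟨C0 * s1, mul_pos hC0pos hs1pos, ?_⟩
  intro ωm ωp hwlt hws δ hδ g hg Y hY ω hω t ht
  obtain ⟨hYl, hYr⟩ := hY t ht
  -- derivative of g
  set gd : ℝ → ℝ := fun y => s / 2 * (1 / Real.cosh (y / δ) ^ 2 * (1 / δ)) with hgddef
  have hgeq : g = fun x => (ωp + ωm) / 2 + s / 2 * Real.tanh (x / δ) :=
    funext fun x => by rw [hg x, hws]
  have hgd : ∀ y, HasDerivAt g (gd y) y := by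
    intro y
    have h1 : HasDerivAt (fun x : ℝ => x / δ) (1 / δ) y := by
      simpa using (hasDerivAt_id y).div_const δ
    have h2 := (my_hasDerivAt_tanh (y / δ)).comp y h1
    have h3 := (h2.const_mul (s / 2)).const_add ((ωp + ωm) / 2)
    rw [hgeq]
    exact h3
  have hgd_pos : ∀ y, 0 < gd y := by
    intro y
    have := Real.cosh_pos (y / δ)
    rw [hgddef]
    positivity
  have hgd_le : ∀ y, gd y ≤ s / (2 * δ) := by
    intro y
    have hc : 1 ≤ Real.cosh (y / δ) ^ 2 := by
      nlinarith [Real.one_le_cosh (y / δ)]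
    have hle : 1 / Real.cosh (y / δ) ^ 2 ≤ 1 := by
      rw [div_le_one (by linarith)]; exact hc
    rw [hgddef]
    have : s / 2 * (1 / Real.cosh (y / δ) ^ 2 * (1 / δ)) ≤ s / 2 * (1 * (1 / δ)) := by
      apply mul_le_mul_of_nonneg_left _ (by linarith)
      apply mul_le_mul_of_nonneg_right hle (by positivity)
    calc s / 2 * (1 / Real.cosh (y / δ) ^ 2 * (1 / δ)) ≤ s / 2 * (1 * (1 / δ)) := this
      _ = s / (2 * δ) := by field_simp
  -- F and its inverse Y t
  set F : ℝ → ℝ := fun y => y + t * g y with hFdef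
  have hF : ∀ y, HasDerivAt F (1 + t * gd y) y := fun y =>
    (hasDerivAt_id y).add ((hgd y).const_mul t)
  have hFd_pos : ∀ y, 0 < 1 + t * gd y := fun y => by
    nlinarith [hgd_pos y, mul_nonneg ht (hgd_pos y).le]
  have hFmono : StrictMono F :=
    strictMono_of_deriv_pos fun x => by rw [(hF x).deriv]; exact hFd_pos x
  have hYmono : Monotone (Y t) := fun x1 x2 h =>
    hFmono.le_iff_le.mp (by rw [hYr x1, hYr x2]; exact h)
  have hYsurj : Function.Surjective (Y t) := fun y => ⟨F y, hYl y⟩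
  have hYcont : Continuous (Y t) := hYmono.continuous_of_surjective hYsurj
  have hYd : ∀ x, HasDerivAt (Y t) (1 + t * gd (Y t x))⁻¹ x := fun x =>
    HasDerivAt.of_local_left_inverse hYcont.continuousAt (hF (Y t x))
      (hFd_pos _).ne' (Eventually.of_forall hYr)
  -- the derivative of ω t
  set f : ℝ → ℝ := fun x => gd (Y t x) * (1 + t * gd (Y t x))⁻¹ with hfdef
  have hωd : ∀ x, HasDerivAt (fun z => ω t z) (f x) x := by
    intro x
    have h := (hgd (Y t x)).comp x (hYd x)
    have he : (fun z => ω t z) = fun z => g (Y t z) := funext fun z => hω t z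
    rw [he]
    exact h
  have hfeq : (fun x : ℝ => deriv (fun z : ℝ => ω t z) x) = f :=
    funext fun x => (hωd x).deriv
  -- continuity of f
  have hgdcont : Continuous gd := by
    have : Continuous fun y : ℝ => 1 / Real.cosh (y / δ) ^ 2 :=
      continuous_const.div ((Real.continuous_cosh.comp (continuous_id.div_const δ)).pow 2)
        (fun y => by positivity)
    rw [hgddef]
    exact (continuous_const.mul (this.mul continuous_const))
  have hfcont : Continuous f := by
    apply (hgdcont.comp hYcont).mul
    exact (continuous_const.add (continuous_const.mul (hgdcont.comp hYcont))).inv₀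
      fun x => (hFd_pos _).ne'
  -- pointwise bounds on f
  have hf0 : ∀ x, 0 ≤ f x := fun x =>
    mul_nonneg (hgd_pos _).le (inv_nonneg.mpr (hFd_pos _).le)
  set d : ℝ := δ + t with hddef
  have hd : 0 < d := by positivity
  set M : ℝ := s / (2 * δ + t * s) with hMdef
  have hden : 0 < 2 * δ + t * s := by nlinarith [mul_nonneg ht hs.le]
  have hM0 : 0 < M := div_pos hs hden
  have hfM : ∀ x, f x ≤ M := by
    intro x
    have ha0 := hgd_pos (Y t x)
    have haA := hgd_le (Y t x)
    have h2δ : (0:ℝ) < 2 * δ := by linarith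
    have haA' : gd (Y t x) * (2 * δ) ≤ s := by
      rw [← le_div_iff₀ h2δ]; exact haA
    have h1a : (0:ℝ) < 1 + t * gd (Y t x) := hFd_pos _
    show gd (Y t x) * (1 + t * gd (Y t x))⁻¹ ≤ s / (2 * δ + t * s)
    rw [← div_eq_mul_inv, div_le_div_iff₀ h1a hden]
    nlinarith [mul_nonneg ht ha0.le, mul_nonneg (mul_nonneg ht ha0.le) hs.le]
  have hMd : M ≤ C0 * d⁻¹ := by
    show s / (2 * δ + t * s) ≤ C0 * (δ + t)⁻¹
    rw [← div_eq_mul_inv, div_le_div_iff₀ hden (by positivity)]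
    nlinarith [mul_nonneg ht hs.le, mul_nonneg (sub_nonneg.mpr hC0) (mul_nonneg ht hs.le)]
  -- bounds for ω t
  have hωb : ∀ x, ωm ≤ ω t x ∧ ω t x ≤ ωp := by
    intro x
    rw [hω t x, hg (Y t x)]
    constructor
    · nlinarith [my_neg_one_le_tanh (Y t x / δ), hwlt]
    · nlinarith [my_tanh_le_one (Y t x / δ), hwlt]
  have hFTC : ∀ n : ℕ, ∫ x in (-(n:ℝ))..(n:ℝ), f x = ω t n - ω t (-(n:ℝ)) := fun n =>
    intervalIntegral.integral_eq_sub_of_hasDerivAt (fun x _ => hωd x)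
      (hfcont.intervalIntegrable _ _)
  have hIb : ∀ n : ℕ, (∫ x in (-(n:ℝ))..(n:ℝ), f x) ≤ s := by
    intro n
    rw [hFTC n]
    have h1 := hωb (n:ℝ); have h2 := hωb (-(n:ℝ))
    linarith [h1.2, h2.1]
  have ha : Tendsto (fun n : ℕ => -(n:ℝ)) atTop atBot :=
    tendsto_neg_atTop_atBot.comp tendsto_natCast_atTop_atTop
  have hb : Tendsto (fun n : ℕ => (n:ℝ)) atTop atTop := tendsto_natCast_atTop_atTop
  have hfint : Integrable f volume := by
    apply MeasureTheory.integrable_of_intervalIntegral_norm_bounded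
      (a := fun n : ℕ => -(n:ℝ)) (b := fun n : ℕ => (n:ℝ)) s
      (fun n => hfcont.integrableOn_Ioc) ha hb
    apply Eventually.of_forall
    intro n
    have he : (∫ x in (-(n:ℝ))..(n:ℝ), ‖f x‖) = ∫ x in (-(n:ℝ))..(n:ℝ), f x := by
      apply intervalIntegral.integral_congr
      intro x _
      exact Real.norm_of_nonneg (hf0 x)
    rw [he]; exact hIb n
  have hIle : (∫ x, f x) ≤ s :=
    le_of_tendsto (MeasureTheory.intervalIntegral_tendsto_integral hfint ha hb)
      (Eventually.of_forall hIb)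
  have hmeas : Measurable fun x => ENNReal.ofReal (f x) := hfcont.measurable.ennreal_ofReal
  have hL : (∫⁻ x, ENNReal.ofReal (f x)) ≤ ENNReal.ofReal s := by
    rw [← ofReal_integral_eq_lintegral_ofReal hfint (Eventually.of_forall hf0)]
    exact ENNReal.ofReal_le_ofReal hIle
  rw [hfeq]
  rcases eq_or_ne p ⊤ with rfl | hptop
  · rw [eLpNorm_exponent_top]
    refine le_trans (eLpNormEssSup_le_of_ae_bound (C := C0 * d⁻¹)
      (Eventually.of_forall fun x => ?_)) ?_
    · rw [Real.norm_of_nonneg (hf0 x)]; exact le_trans (hfM x) hMd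
    · apply ENNReal.ofReal_le_ofReal
      have he : (δ + t) ^ (-1 + 1 / (⊤ : ENNReal).toReal) = d⁻¹ := by
        rw [ENNReal.toReal_top]
        norm_num
        exact Real.rpow_neg_one d
      rw [he]
      have hdi : 0 < d⁻¹ := by positivity
      nlinarith
  · have hp0 : p ≠ 0 := (zero_lt_one.trans_le hp).ne'
    set q : ℝ := p.toReal with hqdef
    have hq1 : 1 ≤ q := by
      simpa using ENNReal.toReal_mono hptop hp
    have hq0 : 0 < q := lt_of_lt_of_le one_pos hq1
    have hqne : q ≠ 0 := hq0.ne'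
    rw [eLpNorm_eq_lintegral_rpow_enorm_toReal hp0 hptop]
    have hcoe : ∀ x, ((‖f x‖₊ : ENNReal)) = ENNReal.ofReal (f x) := fun x => by
      exact Real.enorm_eq_ofReal (hf0 x)
    have key : ∀ x, ENNReal.ofReal (f x) ^ q
        ≤ ENNReal.ofReal M ^ (q-1) * ENNReal.ofReal (f x) := by
      intro x
      have e1 : ENNReal.ofReal (f x) ^ q
          = ENNReal.ofReal (f x) ^ (q-1) * ENNReal.ofReal (f x) := by
        rw [show q = (q-1)+1 by ring,
          ENNReal.rpow_add_of_nonneg _ _ (by linarith) zero_le_one, ENNReal.rpow_one]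
        ring_nf
      rw [e1]
      exact mul_le_mul_left
        (ENNReal.rpow_le_rpow (ENNReal.ofReal_le_ofReal (hfM x)) (by linarith)) _
    have hlin : (∫⁻ x, ((‖f x‖₊ : ENNReal)) ^ q)
        ≤ ENNReal.ofReal M ^ (q-1) * ENNReal.ofReal s := by
      calc (∫⁻ x, ((‖f x‖₊ : ENNReal)) ^ q) = ∫⁻ x, ENNReal.ofReal (f x) ^ q := by
            apply lintegral_congr; intro x; rw [hcoe]
        _ ≤ ∫⁻ x, ENNReal.ofReal M ^ (q-1) * ENNReal.ofReal (f x) := lintegral_mono key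
        _ = ENNReal.ofReal M ^ (q-1) * ∫⁻ x, ENNReal.ofReal (f x) :=
            lintegral_const_mul _ hmeas
        _ ≤ _ := mul_le_mul_right hL _
    have hdpow : 0 < d ^ (-1 + 1/q) := Real.rpow_pos_of_pos hd _
    have e1 : (M ^ (q-1) * s) ^ (1/q) = M ^ ((q-1) * (1/q)) * s ^ (1/q) := by
      rw [Real.mul_rpow (Real.rpow_nonneg hM0.le _) hs.le, ← Real.rpow_mul hM0.le]
    have hreal : (M ^ (q-1) * s) ^ (1/q) ≤ C0 * s1 * d ^ (-1 + 1/q) := by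
      set α : ℝ := (q-1) * (1/q) with hαdef
      have hαeq : α = 1 - 1/q := by rw [hαdef]; field_simp
      have h1q : 0 ≤ 1/q := by positivity
      have h1q1 : 1/q ≤ 1 := by rw [div_le_one hq0]; exact hq1
      have hα0 : 0 ≤ α := mul_nonneg (by linarith) h1q
      have hα1 : α ≤ 1 := by rw [hαeq]; linarith
      have h2 : M ^ α ≤ (C0 * d⁻¹) ^ α := Real.rpow_le_rpow hM0.le hMd hα0
      have h3 : (C0 * d⁻¹) ^ α = C0 ^ α * d ^ (-α) := by
        rw [Real.mul_rpow hC0pos.le (inv_nonneg.mpr hd.le), Real.inv_rpow hd.le,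
          ← Real.rpow_neg hd.le]
      have h4 : C0 ^ α ≤ C0 := by
        calc C0 ^ α ≤ C0 ^ (1:ℝ) := Real.rpow_le_rpow_of_exponent_le hC0 hα1
          _ = C0 := Real.rpow_one C0
      have h5 : s ^ (1/q) ≤ s1 := by
        rcases le_total s 1 with h | h
        · exact le_trans (Real.rpow_le_one hs.le h h1q) hs1
        · calc s ^ (1/q) ≤ s ^ (1:ℝ) := Real.rpow_le_rpow_of_exponent_le h h1q1
            _ = s := Real.rpow_one s
            _ ≤ s1 := hss1
      have hdneg : d ^ (-α) = d ^ (-1 + 1/q) := by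
        congr 1
        rw [hαeq]; ring
      have hsq : 0 ≤ s ^ (1/q) := Real.rpow_nonneg hs.le _
      rw [e1]
      calc M ^ α * s ^ (1/q) ≤ (C0 * d ^ (-1+1/q)) * s1 := by
            apply mul_le_mul _ h5 hsq (by positivity)
            calc M ^ α ≤ C0 ^ α * d ^ (-α) := by rw [← h3]; exact h2
              _ ≤ C0 * d ^ (-1+1/q) := by
                  rw [hdneg]; exact mul_le_mul_of_nonneg_right h4 hdpow.le
        _ = C0 * s1 * d ^ (-1+1/q) := by ring
    calc (∫⁻ x, ((‖f x‖₊ : ENNReal)) ^ q) ^ (1/q)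
        ≤ (ENNReal.ofReal M ^ (q-1) * ENNReal.ofReal s) ^ (1/q) :=
          ENNReal.rpow_le_rpow hlin (by positivity)
      _ = ENNReal.ofReal ((M ^ (q-1) * s) ^ (1/q)) := by
          rw [ENNReal.ofReal_rpow_of_nonneg hM0.le (by linarith),
            ← ENNReal.ofReal_mul (by positivity),
            ENNReal.ofReal_rpow_of_nonneg (by positivity) (by positivity)]
      _ ≤ ENNReal.ofReal (C0 * s1 * d ^ (-1 + 1/q)) := ENNReal.ofReal_le_ofReal hreal
end

section
/- There exists a constant C > 0, depending only on ω₋ and ω₊, such that for all δ ∈ (0,1) and all t > 0 one has sup_{x ∈ ℝ} |ω(t,x) − ω^R(x/t)| ≤ C·δ·t^{−1}·(ln(1+t) + |ln δ|). -/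
lemma keyA (d δ t E : ℝ) (hd : 0 < d) (hδ0 : 0 < δ) (hδ1 : δ < 1) (ht : 0 < t)
    (hE0 : 0 ≤ E) (hEd : E ≤ d)
    (hkey : 0 < E → 2 * t * E ≤ δ * (Real.log d - Real.log E)) :
    E ≤ (4 * d + |Real.log d| + 2) / Real.log 2 * δ * t⁻¹
        * (Real.log (1 + t) + |Real.log δ|) := by
  have hl2 : 0 < Real.log 2 := Real.log_pos one_lt_two
  have hl2' : Real.log 2 ≤ 1 := by
    nlinarith [Real.log_le_sub_one_of_pos (show (0:ℝ) < 2 by norm_num)]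
  set C := (4 * d + |Real.log d| + 2) / Real.log 2 with hCdef
  have hClog : C * Real.log 2 = 4 * d + |Real.log d| + 2 :=
    div_mul_cancel₀ _ hl2.ne'
  have hC : 0 < C := div_pos (by positivity) hl2
  set L := Real.log (1 + t) + |Real.log δ| with hLdef
  have hlt0 : 0 < Real.log (1 + t) := Real.log_pos (by linarith)
  have hb0 : 0 ≤ |Real.log δ| := abs_nonneg _
  have hL0 : 0 < L := by simp only [hLdef]; linarith
  have ha0 : 0 ≤ |Real.log d| := abs_nonneg _
  rw [show C * δ * t⁻¹ * L = C * δ * L / t by field_simp, le_div_iff₀ ht]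
  -- goal : E * t ≤ C * δ * L
  by_cases hLs : L < Real.log 2
  · -- small L : t < 1, δ > 1/2
    have hlt2 : Real.log (1 + t) < Real.log 2 := by
      simp only [hLdef] at hLs; linarith
    have ht1 : t < 1 := by
      have := (Real.log_lt_log_iff (by linarith) (by norm_num)).1 hlt2
      linarith
    have habs : |Real.log δ| = -Real.log δ := abs_of_neg (Real.log_neg hδ0 hδ1)
    have hδhalf : (1:ℝ)/2 < δ := by
      have h1 : Real.log (1/2) < Real.log δ := by
        rw [one_div, Real.log_inv]
        simp only [hLdef] at hLs
        rw [habs] at hLs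
        linarith
      exact (Real.log_lt_log_iff (by norm_num) hδ0).1 h1
    have hlb : t / 2 ≤ Real.log (1 + t) := by
      have h := Real.log_le_sub_one_of_pos (show (0:ℝ) < (1 + t)⁻¹ by positivity)
      rw [Real.log_inv] at h
      have hu : (1 + t) * (1 + t)⁻¹ = 1 := mul_inv_cancel₀ (by linarith)
      nlinarith [inv_pos.2 (show (0:ℝ) < 1 + t by linarith)]
    have h4 : t / 4 ≤ δ * L := by
      have : (1/2 : ℝ) * (t/2) ≤ δ * L := by
        apply mul_le_mul hδhalf.le (by simp only [hLdef]; linarith) (by linarith) hδ0.le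
      linarith
    have hC4 : 4 * d ≤ C := by nlinarith
    calc E * t ≤ d * t := mul_le_mul_of_nonneg_right hEd ht.le
      _ = 4 * d * (t / 4) := by ring
      _ ≤ C * (δ * L) := mul_le_mul hC4 h4 (by linarith) hC.le
      _ = C * δ * L := by ring
  · push_neg at hLs
    have hCL2 : 2 ≤ C * L := by
      have : C * Real.log 2 ≤ C * L := mul_le_mul_of_nonneg_left hLs hC.le
      nlinarith
    rcases hE0.eq_or_lt with hE | hE
    · nlinarith
    by_cases hEε : E * t ≤ δ
    · calc E * t ≤ δ := hEε
        _ = δ * 1 := by ring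
        _ ≤ δ * (C * L) := by nlinarith
        _ = C * δ * L := by ring
    · push_neg at hEε
      have hk := hkey hE
      have hlogE : Real.log δ - Real.log t < Real.log E := by
        have h1 : Real.log (δ / t) < Real.log E := by
          apply Real.log_lt_log (by positivity)
          rw [div_lt_iff₀ ht]; linarith [hEε]
        rwa [Real.log_div hδ0.ne' ht.ne'] at h1
      have hlogt : Real.log t ≤ Real.log (1 + t) := Real.log_le_log ht (by linarith)
      have habs : |Real.log δ| = -Real.log δ := abs_of_neg (Real.log_neg hδ0 hδ1)
      have hbound : Real.log d - Real.log E ≤ |Real.log d| + L := by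
        have : Real.log d ≤ |Real.log d| := le_abs_self _
        simp only [hLdef]; rw [habs]; linarith
      have h2 : 2 * t * E ≤ δ * (|Real.log d| + L) := by
        calc 2 * t * E ≤ δ * (Real.log d - Real.log E) := hk
          _ ≤ δ * (|Real.log d| + L) := mul_le_mul_of_nonneg_left hbound hδ0.le
      -- |log d| ≤ C * log 2 ≤ C * L ; L ≤ C * L (C ≥ 2/log2 ≥ 2 ≥ 1)
      have ha : |Real.log d| ≤ C * L := by
        have h1 : |Real.log d| ≤ C * Real.log 2 := by linarith [hClog]
        have hmul : C * Real.log 2 ≤ C * L := mul_le_mul_of_nonneg_left hLs hC.le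
        linarith
      have hC1 : 1 ≤ C := by nlinarith
      have hLle : L ≤ C * L := le_mul_of_one_le_left hL0.le hC1
      have h3 : δ * (|Real.log d| + L) ≤ δ * (2 * (C * L)) :=
        mul_le_mul_of_nonneg_left (by linarith) hδ0.le
      nlinarith

/-- Uniform convergence of the smooth approximate rarefaction wave to the centered
rarefaction wave `ω^R(z)` (`= ω₋` for `z ≤ ω₋`, `= z` for `ω₋ < z ≤ ω₊`, `= ω₊` for
`z > ω₊`): there is `C > 0` depending only on `ω₋, ω₊` such that for all `δ ∈ (0,1)`
and `t > 0`, `sup_x |ω(t,x) − ω^R(x/t)| ≤ C δ t⁻¹ (ln(1+t) + |ln δ|)`. -/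
theorem burgers_rarefaction_convergence
    (ωm ωp : ℝ) (hω : ωm < ωp) :
    ∃ C : ℝ, 0 < C ∧
      ∀ δ : ℝ, 0 < δ → δ < 1 →
      ∀ g : ℝ → ℝ,
        (∀ x : ℝ, g x = (ωp + ωm) / 2 + ((ωp - ωm) / 2) * Real.tanh (x / δ)) →
      ∀ Y : ℝ → ℝ → ℝ,
        (∀ t : ℝ, 0 ≤ t →
          Function.LeftInverse (Y t) (fun y : ℝ => y + t * g y) ∧
          Function.RightInverse (Y t) (fun y : ℝ => y + t * g y)) →
      ∀ ω : ℝ → ℝ → ℝ, (∀ t x : ℝ, ω t x = g (Y t x)) →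
      ∀ t : ℝ, 0 < t → ∀ x : ℝ,
        |ω t x - (if x / t ≤ ωm then ωm else if x / t ≤ ωp then x / t else ωp)|
          ≤ C * δ * t⁻¹ * (Real.log (1 + t) + |Real.log δ|) := by
  have hd : 0 < ωp - ωm := by linarith
  set d := ωp - ωm with hddef
  have hl2 : 0 < Real.log 2 := Real.log_pos one_lt_two
  refine ⟨(4 * d + |Real.log d| + 2) / Real.log 2, div_pos (by positivity) hl2, ?_⟩
  intro δ hδ0 hδ1 g hg Y hY ω hωdef t ht x
  obtain ⟨hYl, hYr⟩ := hY t ht.le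
  have hx : Y t x + t * g (Y t x) = x := hYr x
  set y := Y t x with hydef
  set v := y / δ with hvdef
  set w := ω t x with hwdef
  have hgw : w = (ωp + ωm) / 2 + (ωp - ωm) / 2 * Real.tanh v := by
    rw [hwdef, hωdef t x, hg]
  have hc := Real.cosh_pos v
  have hcs := Real.cosh_add_sinh v
  have hcs2 := Real.cosh_sub_sinh v
  have h1 : w - ωm = (ωp - ωm) / 2 * (Real.exp v / Real.cosh v) := by
    rw [hgw, Real.tanh_eq_sinh_div_cosh]
    field_simp
    linear_combination (ωp - ωm) * hcs
  have h2 : ωp - w = (ωp - ωm) / 2 * (Real.exp (-v) / Real.cosh v) := by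
    rw [hgw, Real.tanh_eq_sinh_div_cosh]
    field_simp
    linear_combination (ωp - ωm) * hcs2
  have hwm : ωm < w := by
    have : 0 < (ωp - ωm) / 2 * (Real.exp v / Real.cosh v) := by positivity
    linarith
  have hwp : w < ωp := by
    have : 0 < (ωp - ωm) / 2 * (Real.exp (-v) / Real.cosh v) := by positivity
    linarith
  have hA : 0 < w - ωm := by linarith
  have hB : 0 < ωp - w := by linarith
  have hkeyexp : Real.exp (2 * v) * Real.exp (-v) = Real.exp v := by
    rw [← Real.exp_add]; ring_nf
  have hratio : (w - ωm) / (ωp - w) = Real.exp (2 * v) := by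
    rw [div_eq_iff hB.ne', h1, h2, ← hkeyexp]; ring
  have hlogsplit : Real.log (w - ωm) - Real.log (ωp - w) = 2 * v := by
    rw [← Real.log_div hA.ne' hB.ne', hratio, Real.log_exp]
  have hyw : y = x - t * w := by
    have hgy : g y = w := (hwdef.trans (hωdef t x)).symm
    rw [hgy] at hx
    linarith
  have hmain : δ * Real.log (w - ωm) - δ * Real.log (ωp - w) = 2 * x - 2 * (t * w) := by
    have h := hlogsplit
    rw [hvdef] at h
    have hδy : δ * (2 * (y / δ)) = 2 * y := by field_simp
    calc δ * Real.log (w - ωm) - δ * Real.log (ωp - w)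
        = δ * (Real.log (w - ωm) - Real.log (ωp - w)) := by ring
      _ = δ * (2 * (y / δ)) := by rw [h]
      _ = 2 * y := hδy
      _ = 2 * x - 2 * (t * w) := by rw [hyw]; try ring
  have hxz : t * (x / t) = x := mul_div_cancel₀ x ht.ne'
  clear_value w y v
  clear hx hYl hYr hgw h1 h2 hratio hlogsplit hkeyexp hcs hcs2 hc hyw hg hY hωdef hydef hvdef hwdef
  -- apply keyA
  apply keyA d δ t _ hd hδ0 hδ1 ht (abs_nonneg _)
  · -- |w - ωR| ≤ d
    split_ifs with hc1 hc2
    · rw [abs_le]; constructor <;> [linarith; linarith]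
    · push_neg at hc1
      rw [abs_le]; constructor <;> [linarith; linarith]
    · push_neg at hc1 hc2
      rw [abs_le]; constructor <;> [linarith; linarith]
  · split_ifs with hc1 hc2
    · -- x/t ≤ ωm, E = w - ωm
      intro hE
      have hxle : x ≤ ωm * t := (div_le_iff₀ ht).1 hc1
      have hEeq : |w - ωm| = w - ωm := abs_of_pos hA
      rw [hEeq]
      have hlB : Real.log (ωp - w) ≤ Real.log d := Real.log_le_log hB (by linarith)
      have hlB' : δ * Real.log (ωp - w) ≤ δ * Real.log d :=
        mul_le_mul_of_nonneg_left hlB hδ0.le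
      have hexp : δ * (Real.log d - Real.log (w - ωm))
          = δ * Real.log d - δ * Real.log (w - ωm) := by ring
      rw [hexp]
      nlinarith [hmain, hlB']
    · -- ωm < x/t ≤ ωp
      push_neg at hc1
      intro hE
      have hzm : ωm * t < x := by
        have := (lt_div_iff₀ ht).1 hc1; linarith
      rcases le_or_gt w (x / t) with hwz | hwz
      · have hEeq : |w - x / t| = x / t - w := by
          rw [abs_of_nonpos (by linarith)]; ring
        rw [hEeq] at hE ⊢
        have hEB : x / t - w ≤ ωp - w := by linarith
        have hlE : Real.log (x / t - w) ≤ Real.log (ωp - w) := Real.log_le_log hE hEB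
        have hlE' : δ * Real.log (x / t - w) ≤ δ * Real.log (ωp - w) :=
          mul_le_mul_of_nonneg_left hlE hδ0.le
        have hlA : Real.log (w - ωm) ≤ Real.log d := Real.log_le_log hA (by linarith)
        have hlA' : δ * Real.log (w - ωm) ≤ δ * Real.log d :=
          mul_le_mul_of_nonneg_left hlA hδ0.le
        have h2x : 2 * x - 2 * (t * w) = 2 * t * (x / t - w) := by
          linear_combination (-2) * hxz
        have hexp : δ * (Real.log d - Real.log (x / t - w))
            = δ * Real.log d - δ * Real.log (x / t - w) := by ring
        rw [hexp]
        nlinarith [hmain, hlE', hlA', h2x]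
      · have hEeq : |w - x / t| = w - x / t := abs_of_pos (by linarith)
        rw [hEeq] at hE ⊢
        have hEA : w - x / t ≤ w - ωm := by
          have : ωm < x / t := hc1
          linarith
        have hlE : Real.log (w - x / t) ≤ Real.log (w - ωm) := Real.log_le_log hE hEA
        have hlE' : δ * Real.log (w - x / t) ≤ δ * Real.log (w - ωm) :=
          mul_le_mul_of_nonneg_left hlE hδ0.le
        have hlB : Real.log (ωp - w) ≤ Real.log d := Real.log_le_log hB (by linarith)
        have hlB' : δ * Real.log (ωp - w) ≤ δ * Real.log d :=
          mul_le_mul_of_nonneg_left hlB hδ0.le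
        have h2x : 2 * x - 2 * (t * w) = -(2 * t * (w - x / t)) := by
          linear_combination (-2) * hxz
        have hexp : δ * (Real.log d - Real.log (w - x / t))
            = δ * Real.log d - δ * Real.log (w - x / t) := by ring
        rw [hexp]
        nlinarith [hmain, hlE', hlB', h2x]
    · -- ωp < x/t, E = ωp - w
      push_neg at hc1 hc2
      intro hE
      have hxge : ωp * t < x := by
        have := (lt_div_iff₀ ht).1 hc2; linarith
      have hEeq : |w - ωp| = ωp - w := by
        rw [abs_of_neg (by linarith)]; ring
      rw [hEeq]
      have hlA : Real.log (w - ωm) ≤ Real.log d := Real.log_le_log hA (by linarith)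
      have hlA' : δ * Real.log (w - ωm) ≤ δ * Real.log d :=
        mul_le_mul_of_nonneg_left hlA hδ0.le
      have hexp : δ * (Real.log d - Real.log (ωp - w))
          = δ * Real.log d - δ * Real.log (ωp - w) := by ring
      rw [hexp]
      nlinarith [hmain, hlA']
end

section
/- There exists a constant C > 1 such that for all ρ, ρ̄ ∈ [1/2, 2], all θ, θ̄ ∈ [1, 3] and all u, ū ∈ ℝ³, the relative entropy η := ρ·θ̄·Ψ(ρ̄/ρ) + (3/2)·ρ·θ̄·Ψ(θ/θ̄) + (3/4)·ρ·|u − ū|² satisfies C^{−1}·(|ρ − ρ̄|² + |u − ū|² + |θ − θ̄|²) ≤ η ≤ C·(|ρ − ρ̄|² + |u − ū|² + |θ − θ̄|²). -/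
/-- `Ψ(s) = s − ln s − 1`. -/
noncomputable def Ψ (s : ℝ) : ℝ := s - Real.log s - 1

lemma psi_nonneg {s : ℝ} (h0 : 0 < s) : 0 ≤ Ψ s := by
  have := Real.log_le_sub_one_of_pos h0
  simp only [Ψ]; linarith

lemma psi_lb {s : ℝ} (h0 : 0 < s) (h4 : s ≤ 4) : (s - 1) ^ 2 ≤ 9 * Ψ s := by
  set t := Real.sqrt s with ht
  have ht0 : 0 < t := Real.sqrt_pos.mpr h0
  have hts : t ^ 2 = s := Real.sq_sqrt h0.le
  have ht2 : t ≤ 2 := by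
    nlinarith [hts, ht0]
  have hlog : Real.log s = 2 * Real.log t := by
    rw [← hts, Real.log_pow]; push_cast; ring
  have hlt : Real.log t ≤ t - 1 := Real.log_le_sub_one_of_pos ht0
  have hΨ : (t - 1) ^ 2 ≤ Ψ s := by
    simp only [Ψ, hlog]; nlinarith [hts]
  nlinarith [hΨ, sq_nonneg (t - 1), ht0.le, ht2, hts]

lemma psi_ub {s : ℝ} (h0 : 0 < s) : s * Ψ s ≤ (s - 1) ^ 2 := by
  have h1 : Real.log s⁻¹ ≤ s⁻¹ - 1 := Real.log_le_sub_one_of_pos (by positivity)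
  rw [Real.log_inv] at h1
  have h2 : s * (-Real.log s) ≤ s * (s⁻¹ - 1) :=
    mul_le_mul_of_nonneg_left h1 h0.le
  have h3 : s * s⁻¹ = 1 := mul_inv_cancel₀ h0.ne'
  simp only [Ψ]; nlinarith [h2, h3]


lemma aux_low1 {ρ ρb θb P : ℝ} (hρ1 : 1/2 ≤ ρ) (hρ2 : ρ ≤ 2) (hθb1 : 1 ≤ θb)
    (hP0 : 0 ≤ P) (F1 : (ρb - ρ) ^ 2 ≤ 9 * ρ ^ 2 * P) :
    (ρ - ρb) ^ 2 / 36 ≤ ρ * θb * P := by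
  nlinarith [F1, mul_nonneg (mul_nonneg (by linarith : (0:ℝ) ≤ ρ) hP0)
    (by linarith : (0:ℝ) ≤ 2 * θb - ρ), sq_nonneg (ρ - ρb)]

lemma aux_low2 {ρ θ θb Q : ℝ} (hρ1 : 1/2 ≤ ρ) (hθb1 : 1 ≤ θb) (hθb2 : θb ≤ 3)
    (hQ0 : 0 ≤ Q) (F3 : (θ - θb) ^ 2 ≤ 9 * θb ^ 2 * Q) :
    (θ - θb) ^ 2 / 36 ≤ 3 / 2 * ρ * θb * Q := by
  nlinarith [F3, mul_nonneg (mul_nonneg (by linarith : (0:ℝ) ≤ θb) hQ0)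
    (by linarith : (0:ℝ) ≤ 6 * ρ - θb), sq_nonneg (θ - θb)]

lemma aux_up1 {ρ ρb θb P : ℝ} (hρ0 : 0 < ρ) (hρb1 : 1/2 ≤ ρb) (hθb2 : θb ≤ 3)
    (hP0 : 0 ≤ P) (F2 : ρ * ρb * P ≤ (ρb - ρ) ^ 2) :
    ρ * θb * P ≤ 6 * (ρ - ρb) ^ 2 := by
  nlinarith [F2, mul_nonneg (mul_nonneg hρ0.le hP0) (by linarith : (0:ℝ) ≤ 6 * ρb - θb)]

lemma aux_up2 {ρ θ θb Q : ℝ} (hρ2 : ρ ≤ 2) (hθ1 : 1 ≤ θ) (hθb0 : 0 < θb)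
    (hQ0 : 0 ≤ Q) (F4 : θ * θb * Q ≤ (θ - θb) ^ 2) :
    3 / 2 * ρ * θb * Q ≤ 3 * (θ - θb) ^ 2 := by
  nlinarith [F4, mul_nonneg (mul_nonneg hθb0.le hQ0) (by linarith : (0:ℝ) ≤ 2 * θ - ρ)]

/-- Equivalence of the relative entropy
`η = ρθ̄Ψ(ρ̄/ρ) + (3/2)ρθ̄Ψ(θ/θ̄) + (3/4)ρ|u−ū|²` with the squared distance
`|ρ−ρ̄|² + |u−ū|² + |θ−θ̄|²`, uniformly for `ρ, ρ̄ ∈ [1/2,2]`, `θ, θ̄ ∈ [1,3]`. -/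
theorem relative_entropy_equivalence :
    ∃ C : ℝ, 1 < C ∧
      ∀ (ρ ρb θ θb : ℝ) (u ub : EuclideanSpace ℝ (Fin 3)),
        ρ ∈ Set.Icc (1 / 2 : ℝ) 2 → ρb ∈ Set.Icc (1 / 2 : ℝ) 2 →
        θ ∈ Set.Icc (1 : ℝ) 3 → θb ∈ Set.Icc (1 : ℝ) 3 →
        C⁻¹ * (|ρ - ρb| ^ 2 + ‖u - ub‖ ^ 2 + |θ - θb| ^ 2)
            ≤ ρ * θb * Ψ (ρb / ρ) + (3 / 2) * ρ * θb * Ψ (θ / θb)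
              + (3 / 4) * ρ * ‖u - ub‖ ^ 2 ∧
          ρ * θb * Ψ (ρb / ρ) + (3 / 2) * ρ * θb * Ψ (θ / θb)
              + (3 / 4) * ρ * ‖u - ub‖ ^ 2
            ≤ C * (|ρ - ρb| ^ 2 + ‖u - ub‖ ^ 2 + |θ - θb| ^ 2) := by
  refine ⟨36, by norm_num, ?_⟩
  rintro ρ ρb θ θb u ub ⟨hρ1, hρ2⟩ ⟨hρb1, hρb2⟩ ⟨hθ1, hθ2⟩ ⟨hθb1, hθb2⟩
  have hρ0 : 0 < ρ := by linarith
  have hρb0 : 0 < ρb := by linarith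
  have hθ0 : 0 < θ := by linarith
  have hθb0 : 0 < θb := by linarith
  set N : ℝ := ‖u - ub‖ with hN
  have hN2 : 0 ≤ N ^ 2 := sq_nonneg N
  set P : ℝ := Ψ (ρb / ρ) with hPdef
  set Q : ℝ := Ψ (θ / θb) with hQdef
  have hs1 : 0 < ρb / ρ := by positivity
  have hs1' : ρb / ρ ≤ 4 := by rw [div_le_iff₀ hρ0]; linarith
  have hs2 : 0 < θ / θb := by positivity
  have hs2' : θ / θb ≤ 4 := by rw [div_le_iff₀ hθb0]; linarith
  have hP0 : 0 ≤ P := psi_nonneg hs1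
  have hQ0 : 0 ≤ Q := psi_nonneg hs2
  -- key polynomial facts
  have e1 : ρ ^ 2 * (ρb / ρ - 1) ^ 2 = (ρb - ρ) ^ 2 := by
    field_simp
  have e2 : θb ^ 2 * (θ / θb - 1) ^ 2 = (θ - θb) ^ 2 := by
    field_simp
  have F1 : (ρb - ρ) ^ 2 ≤ 9 * ρ ^ 2 * P := by
    have h := psi_lb hs1 hs1'
    have := mul_le_mul_of_nonneg_left h (sq_nonneg ρ)
    rw [e1] at this; linarith
  have F3 : (θ - θb) ^ 2 ≤ 9 * θb ^ 2 * Q := by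
    have h := psi_lb hs2 hs2'
    have := mul_le_mul_of_nonneg_left h (sq_nonneg θb)
    rw [e2] at this; linarith
  have F2 : ρ * ρb * P ≤ (ρb - ρ) ^ 2 := by
    have h := psi_ub hs1
    have h2 := mul_le_mul_of_nonneg_left h (sq_nonneg ρ)
    have e3 : ρ ^ 2 * (ρb / ρ * P) = ρ * ρb * P := by
      field_simp
    rw [e3, e1] at h2; exact h2
  have F4 : θ * θb * Q ≤ (θ - θb) ^ 2 := by
    have h := psi_ub hs2
    have h2 := mul_le_mul_of_nonneg_left h (sq_nonneg θb)
    have e3 : θb ^ 2 * (θ / θb * Q) = θ * θb * Q := by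
      field_simp
    rw [e3, e2] at h2; exact h2
  rw [sq_abs, sq_abs]
  constructor
  · have t1 := aux_low1 hρ1 hρ2 hθb1 hP0 F1
    have t2 := aux_low2 hρ1 hθb1 hθb2 hQ0 F3
    have t3 : N ^ 2 / 36 ≤ 3 / 4 * ρ * N ^ 2 := by
      have h : N ^ 2 / 36 = 1 / 36 * N ^ 2 := by ring
      rw [h]
      exact mul_le_mul_of_nonneg_right (by linarith) hN2
    have h36 : (36 : ℝ)⁻¹ = 1 / 36 := by norm_num
    rw [h36]
    linarith [t1, t2, t3]
  · have t1 := aux_up1 hρ0 hρb1 hθb2 hP0 F2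
    have t2 := aux_up2 hρ2 hθ1 hθb0 hQ0 F4
    have t3 : 3 / 4 * ρ * N ^ 2 ≤ 2 * N ^ 2 :=
      mul_le_mul_of_nonneg_right (by linarith) hN2
    linarith [t1, t2, t3, sq_nonneg (ρ - ρb), sq_nonneg (θ - θb), hN2]
end

section
/- For every v ∈ ℝ³ and every i, j ∈ {1,2,3}, the function v* ↦ Φ_{ij}(v − v*)·μ(v*) is Lebesgue integrable on ℝ³, so the Landau collision frequency σ^{ij}(v) := ∫_{ℝ³} Φ_{ij}(v − v*)·μ(v*) dv* is well defined. Moreover, for each v ∈ ℝ³ the matrix (σ^{ij}(v))_{1≤i,j≤3} is symmetric and positive definite: for every w ∈ ℝ³ with w ≠ 0 one has Σ_{i,j} σ^{ij}(v)·w_i·w_j > 0. -/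
open MeasureTheory
open scoped Classical

/-- The Landau collision kernel for Coulomb interactions,
`Φ_{ij}(z) = |z|⁻¹ (δ_{ij} − z_i z_j / |z|²)` for `z ≠ 0`, with `Φ_{ij}(0) = 0`. -/
noncomputable def LandauKernel (z : EuclideanSpace ℝ (Fin 3)) (i j : Fin 3) : ℝ :=
  if z = 0 then 0
  else ‖z‖⁻¹ * ((if i = j then (1 : ℝ) else 0) - z i * z j / ‖z‖ ^ 2)

/-- The global Maxwellian `μ(v) = (2π)^{−3/2} exp(−|v|²/2)`. -/
noncomputable def globalMaxwellian (v : EuclideanSpace ℝ (Fin 3)) : ℝ :=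
  (2 * Real.pi) ^ (-(3 : ℝ) / 2) * Real.exp (-‖v‖ ^ 2 / 2)

open scoped RealInnerProductSpace

/-! ### Auxiliary one-dimensional integrability lemmas -/

lemma landauAux.integrable_abs_rpow_mul_exp_neg_mul_sq {b : ℝ} (hb : 0 < b) {s : ℝ}
    (hs : -1 < s) :
    Integrable fun x : ℝ => |x| ^ s * Real.exp (-b * x ^ 2) := by
  rw [← integrableOn_univ, ← @Set.Iio_union_Ici _ _ (0 : ℝ), integrableOn_union,
    integrableOn_Ici_iff_integrableOn_Ioi]
  constructor
  · rw [← (Measure.measurePreserving_neg (volume : Measure ℝ)).integrableOn_comp_preimage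
        (Homeomorph.neg ℝ).measurableEmbedding]
    simp only [Function.comp_def, neg_sq, Set.neg_preimage, Set.neg_Iio, neg_neg, neg_zero,
      abs_neg]
    exact (integrableOn_rpow_mul_exp_neg_mul_sq hb hs).congr_fun
      (fun x hx => by rw [abs_of_pos hx]) measurableSet_Ioi
  · exact (integrableOn_rpow_mul_exp_neg_mul_sq hb hs).congr_fun
      (fun x hx => by rw [abs_of_pos hx]) measurableSet_Ioi

lemma landauAux.oneD_integrable (c : ℝ) :
    Integrable fun t : ℝ => |c - t| ^ (-(1/3) : ℝ) * Real.exp (-t ^ 2 / 2) := by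
  rw [← integrable_comp_sub_left (fun t : ℝ => |c - t| ^ (-(1/3) : ℝ) * Real.exp (-t ^ 2 / 2)) c]
  simp only [sub_sub_cancel]
  have hmaj : Integrable fun u : ℝ =>
      Real.exp (c ^ 2 / 2) * (|u| ^ (-(1/3) : ℝ) * Real.exp (-(1/4) * u ^ 2)) :=
    (landauAux.integrable_abs_rpow_mul_exp_neg_mul_sq (by norm_num) (by norm_num)).const_mul _
  refine hmaj.mono' ?_ ?_
  · refine Measurable.aestronglyMeasurable ?_
    fun_prop
  · filter_upwards with u
    rw [Real.norm_eq_abs, abs_mul, abs_of_nonneg (Real.rpow_nonneg (abs_nonneg _) _),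
      abs_of_nonneg (Real.exp_pos _).le, mul_comm (Real.exp (c ^ 2 / 2)), mul_assoc]
    refine mul_le_mul_of_nonneg_left ?_ (Real.rpow_nonneg (abs_nonneg _) _)
    rw [← Real.exp_add]
    apply Real.exp_le_exp.2
    nlinarith [sq_nonneg (u - 2*c), sq_nonneg (c - u)]

/-! ### Coordinatewise bounds -/

lemma landauAux.coord_le_norm (z : EuclideanSpace ℝ (Fin 3)) (k : Fin 3) : |z k| ≤ ‖z‖ := by
  rw [EuclideanSpace.norm_eq]
  rw [← Real.sqrt_sq (abs_nonneg (z k))]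
  apply Real.sqrt_le_sqrt
  have := Finset.single_le_sum (f := fun i => ‖z i‖ ^ 2)
    (fun i _ => sq_nonneg _) (Finset.mem_univ k)
  simpa [Real.norm_eq_abs, sq_abs] using this

lemma landauAux.norm_inv_le_prod (z : EuclideanSpace ℝ (Fin 3)) (hz : ∀ k, z k ≠ 0) :
    ‖z‖⁻¹ ≤ ∏ k, |z k| ^ (-(1/3) : ℝ) := by
  have hzn : z ≠ 0 := fun h => hz 0 (by simp [h])
  have hnorm : 0 < ‖z‖ := norm_pos_iff.2 hzn
  have hppos : 0 < ∏ k, |z k| ^ ((1/3) : ℝ) := by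
    apply Finset.prod_pos
    intro k _
    exact Real.rpow_pos_of_pos (abs_pos.2 (hz k)) _
  have hle : (∏ k, |z k| ^ ((1/3) : ℝ)) ≤ ‖z‖ := by
    calc (∏ k : Fin 3, |z k| ^ ((1/3) : ℝ)) ≤ ∏ k : Fin 3, ‖z‖ ^ ((1/3) : ℝ) := by
          apply Finset.prod_le_prod
          · exact fun k _ => (Real.rpow_pos_of_pos (abs_pos.2 (hz k)) _).le
          · exact fun k _ => Real.rpow_le_rpow (abs_nonneg _) (landauAux.coord_le_norm z k)
              (by norm_num)
      _ = ‖z‖ := by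
          rw [Finset.prod_const]
          rw [Finset.card_univ, Fintype.card_fin, ← Real.rpow_natCast (‖z‖ ^ ((1/3):ℝ)) 3,
            ← Real.rpow_mul hnorm.le]
          norm_num
  have hprod : (∏ k, |z k| ^ (-(1/3) : ℝ)) = (∏ k, |z k| ^ ((1/3) : ℝ))⁻¹ := by
    rw [← Finset.prod_inv_distrib]
    congr 1; funext k
    rw [← Real.rpow_neg (abs_nonneg _)]
  rw [hprod]
  exact inv_anti₀ hppos hle

lemma landauAux.kernel_abs_le (z : EuclideanSpace ℝ (Fin 3)) (i j : Fin 3) :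
    |LandauKernel z i j| ≤ 2 * ‖z‖⁻¹ := by
  by_cases hz : z = 0
  · simp [LandauKernel, hz]
  · have hnorm : 0 < ‖z‖ := norm_pos_iff.2 hz
    rw [LandauKernel, if_neg hz, abs_mul, abs_of_nonneg (inv_nonneg.2 hnorm.le), mul_comm]
    apply mul_le_mul_of_nonneg_right _ (inv_nonneg.2 hnorm.le)
    have h1 : |z i * z j / ‖z‖ ^ 2| ≤ 1 := by
      rw [abs_div, abs_mul, abs_of_nonneg (sq_nonneg ‖z‖)]
      rw [div_le_one (by positivity)]
      calc |z i| * |z j| ≤ ‖z‖ * ‖z‖ :=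
            mul_le_mul (landauAux.coord_le_norm z i) (landauAux.coord_le_norm z j)
              (abs_nonneg _) hnorm.le
        _ = ‖z‖ ^ 2 := (sq ‖z‖).symm
    have h2 : |(if i = j then (1:ℝ) else 0)| ≤ 1 := by split <;> norm_num
    calc |(if i = j then (1:ℝ) else 0) - z i * z j / ‖z‖ ^ 2|
        ≤ |(if i = j then (1:ℝ) else 0)| + |z i * z j / ‖z‖ ^ 2| := abs_sub _ _
      _ ≤ 2 := by linarith

/-! ### The Maxwellian -/

lemma landauAux.maxwell_prod (w : EuclideanSpace ℝ (Fin 3)) :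
    Real.exp (-‖w‖ ^ 2 / 2) = ∏ k, Real.exp (-(w k) ^ 2 / 2) := by
  rw [← Real.exp_sum]
  congr 1
  have h : ‖w‖ ^ 2 = ∑ k, (w k) ^ 2 := by
    rw [EuclideanSpace.norm_eq, Real.sq_sqrt (by positivity)]
    simp [Real.norm_eq_abs, sq_abs]
  rw [h, ← Finset.sum_div, ← Finset.sum_neg_distrib]

lemma landauAux.maxwell_pos (w : EuclideanSpace ℝ (Fin 3)) : 0 < globalMaxwellian w := by
  unfold globalMaxwellian
  positivity

/-! ### Integrability of the majorant and null sets -/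

lemma landauAux.prod_bound_integrable (v : EuclideanSpace ℝ (Fin 3)) :
    Integrable (fun w : EuclideanSpace ℝ (Fin 3) =>
      ∏ k, |v k - w k| ^ (-(1/3) : ℝ) * Real.exp (-(w k) ^ 2 / 2)) := by
  have e := EuclideanSpace.volume_preserving_symm_measurableEquiv_toLp (Fin 3)
  rw [← (e.symm (MeasurableEquiv.toLp 2 (Fin 3 → ℝ)).symm).integrable_comp_emb
    (MeasurableEquiv.measurableEmbedding _)]
  have h : ((fun w : EuclideanSpace ℝ (Fin 3) =>
      ∏ k, |v k - w k| ^ (-(1/3) : ℝ) * Real.exp (-(w k) ^ 2 / 2)) ∘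
      (MeasurableEquiv.toLp 2 (Fin 3 → ℝ)).symm.symm)
      = fun x : Fin 3 → ℝ => ∏ k, |v k - x k| ^ (-(1/3) : ℝ) * Real.exp (-(x k) ^ 2 / 2) := rfl
  rw [h]
  exact Integrable.fintype_prod (f := fun k t => |v k - t| ^ (-(1/3) : ℝ) *
    Real.exp (-t ^ 2 / 2)) (fun k => landauAux.oneD_integrable (v k))

lemma landauAux.hyperplane_null (v : EuclideanSpace ℝ (Fin 3)) (k : Fin 3) :
    volume {w : EuclideanSpace ℝ (Fin 3) | w k = v k} = 0 := by
  have e := EuclideanSpace.volume_preserving_symm_measurableEquiv_toLp (Fin 3)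
  have h : {w : EuclideanSpace ℝ (Fin 3) | w k = v k}
      = (MeasurableEquiv.toLp 2 (Fin 3 → ℝ)).symm ⁻¹' {x : Fin 3 → ℝ | x k = v k} := rfl
  rw [h, e.measure_preimage]
  · exact Measure.pi_hyperplane (fun _ : Fin 3 => (volume : Measure ℝ)) k (v k)
  · exact (measurableSet_eq_fun (measurable_pi_apply k) measurable_const).nullMeasurableSet

/-! ### The main integrability lemma -/

lemma landauAux.integrable (v : EuclideanSpace ℝ (Fin 3)) (i j : Fin 3) :
    Integrable (fun w : EuclideanSpace ℝ (Fin 3) =>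
      LandauKernel (v - w) i j * globalMaxwellian w) := by
  set C : ℝ := (2 * Real.pi) ^ (-(3 : ℝ) / 2) with hC
  have hCpos : 0 < C := by rw [hC]; positivity
  have hmaj : Integrable (fun w : EuclideanSpace ℝ (Fin 3) =>
      (2 * C) * ∏ k, |v k - w k| ^ (-(1/3) : ℝ) * Real.exp (-(w k) ^ 2 / 2)) :=
    (landauAux.prod_bound_integrable v).const_mul _
  refine hmaj.mono' ?_ ?_
  · refine Measurable.aestronglyMeasurable ?_
    apply Measurable.mul
    · apply Measurable.comp (f := fun w : EuclideanSpace ℝ (Fin 3) => v - w)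
        (g := fun z => LandauKernel z i j)
      · apply Measurable.ite
        · exact measurableSet_eq_fun measurable_id measurable_const
        · exact measurable_const
        · fun_prop
      · fun_prop
    · unfold globalMaxwellian; fun_prop
  · have hae : ∀ᵐ w : EuclideanSpace ℝ (Fin 3), ∀ k : Fin 3, w k ≠ v k := by
      rw [MeasureTheory.ae_all_iff]
      intro k
      rw [ae_iff]
      have h : {w : EuclideanSpace ℝ (Fin 3) | ¬ w k ≠ v k}
          = {w : EuclideanSpace ℝ (Fin 3) | w k = v k} := by ext w; simp
      rw [h]
      exact landauAux.hyperplane_null v k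
    filter_upwards [hae] with w hw
    set z : EuclideanSpace ℝ (Fin 3) := v - w with hz
    have hzk : ∀ k, z k = v k - w k := fun k => rfl
    have hzk0 : ∀ k, z k ≠ 0 := by
      intro k
      rw [hzk k, sub_ne_zero]
      exact fun h => hw k h.symm
    have h1 : ‖LandauKernel z i j * globalMaxwellian w‖
        ≤ (2 * ‖z‖⁻¹) * globalMaxwellian w := by
      rw [Real.norm_eq_abs, abs_mul, abs_of_pos (landauAux.maxwell_pos w)]
      exact mul_le_mul_of_nonneg_right (landauAux.kernel_abs_le z i j)
        (landauAux.maxwell_pos w).le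
    refine h1.trans ?_
    have h2 : globalMaxwellian w = C * ∏ k, Real.exp (-(w k) ^ 2 / 2) := by
      rw [globalMaxwellian, landauAux.maxwell_prod]
    rw [h2]
    have h3 : (2 * ‖z‖⁻¹) * (C * ∏ k, Real.exp (-(w k) ^ 2 / 2))
        ≤ (2 * ∏ k, |z k| ^ (-(1/3) : ℝ)) * (C * ∏ k, Real.exp (-(w k) ^ 2 / 2)) := by
      apply mul_le_mul_of_nonneg_right
      · exact mul_le_mul_of_nonneg_left (landauAux.norm_inv_le_prod z hzk0) (by norm_num)
      · positivity
    refine h3.trans (le_of_eq ?_)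
    simp only [← hzk]
    rw [Finset.prod_mul_distrib]
    ring

/-! ### Pointwise symmetry of the kernel -/

lemma landauAux.kernel_symm (z : EuclideanSpace ℝ (Fin 3)) (i j : Fin 3) :
    LandauKernel z i j = LandauKernel z j i := by
  unfold LandauKernel
  by_cases hz : z = 0
  · simp [hz]
  · rw [if_neg hz, if_neg hz]
    congr 1
    congr 1
    · by_cases hij : i = j
      · simp [hij]
      · rw [if_neg hij, if_neg (fun h => hij h.symm)]
    · rw [mul_comm]

/-! ### Cauchy–Schwarz pieces -/

lemma landauAux.euclInnerSum (z w : EuclideanSpace ℝ (Fin 3)) : ⟪z, w⟫ = ∑ i, z i * w i := by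
  simp [PiLp.inner_apply, RCLike.inner_apply, conj_trivial, mul_comm]

lemma landauAux.sum_sq_eq (w : EuclideanSpace ℝ (Fin 3)) : ∑ i, (w i) ^ 2 = ‖w‖ ^ 2 := by
  rw [EuclideanSpace.norm_eq, Real.sq_sqrt (by positivity)]
  simp [Real.norm_eq_abs, sq_abs]

lemma landauAux.CS (z w : EuclideanSpace ℝ (Fin 3)) (hz : z ≠ 0) :
    (∑ i, z i * w i) ^ 2 / ‖z‖ ^ 2 ≤ ∑ i, (w i) ^ 2 := by
  have h1 : (∑ i, z i * w i) = ⟪z, w⟫ := (landauAux.euclInnerSum z w).symm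
  have h3 := real_inner_mul_inner_self_le z w
  rw [real_inner_self_eq_norm_mul_norm, real_inner_self_eq_norm_mul_norm] at h3
  have hn : (0:ℝ) < ‖z‖ ^ 2 := pow_pos (norm_pos_iff.2 hz) 2
  rw [div_le_iff₀ hn, h1, landauAux.sum_sq_eq]
  nlinarith

lemma landauAux.span_ne_top (w : EuclideanSpace ℝ (Fin 3)) (hw : w ≠ 0) :
    (Submodule.span ℝ {w}) ≠ ⊤ := by
  intro h
  have h1 : Module.finrank ℝ (Submodule.span ℝ {w}) = 1 := finrank_span_singleton hw
  rw [h, finrank_top] at h1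
  simp [finrank_euclideanSpace_fin] at h1

lemma landauAux.preimage_null (v w : EuclideanSpace ℝ (Fin 3)) (hw : w ≠ 0) :
    volume ((fun u : EuclideanSpace ℝ (Fin 3) => v - u) ⁻¹'
      ((Submodule.span ℝ {w} : Submodule ℝ (EuclideanSpace ℝ (Fin 3))) : Set _)) = 0 := by
  have h : ((fun u : EuclideanSpace ℝ (Fin 3) => v - u) ⁻¹'
      ((Submodule.span ℝ {w} : Submodule ℝ _) : Set _))
      = (fun u : EuclideanSpace ℝ (Fin 3) => -u) ⁻¹'
        ((fun u : EuclideanSpace ℝ (Fin 3) => v + u) ⁻¹'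
          ((Submodule.span ℝ {w} : Submodule ℝ _) : Set _)) := by
    ext u; simp [sub_eq_add_neg]
  rw [h, Measure.measure_preimage_neg, measure_preimage_add]
  exact Measure.addHaar_submodule volume _ (landauAux.span_ne_top w hw)

/-! ### Pointwise formula for the quadratic form -/

lemma landauAux.quad_form (z : EuclideanSpace ℝ (Fin 3)) (m : ℝ) (w : EuclideanSpace ℝ (Fin 3)) :
    (∑ i, ∑ j, LandauKernel z i j * m * (w i * w j))
      = if z = 0 then 0 else
        ‖z‖⁻¹ * m * ((∑ i, (w i) ^ 2) - (∑ i, z i * w i) ^ 2 / ‖z‖ ^ 2) := by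
  by_cases hz : z = 0
  · simp [LandauKernel, hz]
  · rw [if_neg hz]
    simp only [LandauKernel, if_neg hz, Fin.sum_univ_three]
    norm_num [Fin.ext_iff]
    ring

/-- Well-definedness, symmetry and positive definiteness of the Landau collision
frequency `σ^{ij}(v) = ∫ Φ_{ij}(v − v⋆) μ(v⋆) dv⋆`. -/
theorem landau_collision_frequency_posdef :
    (∀ (v : EuclideanSpace ℝ (Fin 3)) (i j : Fin 3),
      Integrable (fun w : EuclideanSpace ℝ (Fin 3) =>
        LandauKernel (v - w) i j * globalMaxwellian w)) ∧
    ∀ v : EuclideanSpace ℝ (Fin 3),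
      (∀ i j : Fin 3,
        (∫ w : EuclideanSpace ℝ (Fin 3),
            LandauKernel (v - w) i j * globalMaxwellian w)
          = ∫ w : EuclideanSpace ℝ (Fin 3),
              LandauKernel (v - w) j i * globalMaxwellian w) ∧
      ∀ w : EuclideanSpace ℝ (Fin 3), w ≠ 0 →
        0 < ∑ i : Fin 3, ∑ j : Fin 3,
          (∫ u : EuclideanSpace ℝ (Fin 3),
            LandauKernel (v - u) i j * globalMaxwellian u) * w i * w j := by
  refine ⟨landauAux.integrable, fun v => ⟨fun i j => ?_, fun w hw => ?_⟩⟩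
  · congr 1
    funext u
    rw [landauAux.kernel_symm]
  · -- positivity
    set g : EuclideanSpace ℝ (Fin 3) → ℝ := fun u =>
      ∑ i, ∑ j, LandauKernel (v - u) i j * globalMaxwellian u * (w i * w j) with hg
    have hint : ∀ i j : Fin 3, Integrable (fun u : EuclideanSpace ℝ (Fin 3) =>
        LandauKernel (v - u) i j * globalMaxwellian u * (w i * w j)) :=
      fun i j => (landauAux.integrable v i j).mul_const _
    have hgint : Integrable g := by
      rw [hg]
      exact integrable_finset_sum _ (fun i _ => integrable_finset_sum _ (fun j _ => hint i j))
    have hstep : (∑ i : Fin 3, ∑ j : Fin 3,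
          (∫ u : EuclideanSpace ℝ (Fin 3),
            LandauKernel (v - u) i j * globalMaxwellian u) * w i * w j)
        = ∫ u, g u := by
      have h1 : ∀ i j : Fin 3,
          (∫ u : EuclideanSpace ℝ (Fin 3),
            LandauKernel (v - u) i j * globalMaxwellian u) * w i * w j
          = ∫ u : EuclideanSpace ℝ (Fin 3),
              LandauKernel (v - u) i j * globalMaxwellian u * (w i * w j) := by
        intro i j
        rw [mul_assoc, ← integral_mul_const]
      calc (∑ i : Fin 3, ∑ j : Fin 3,
              (∫ u, LandauKernel (v - u) i j * globalMaxwellian u) * w i * w j)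
          = ∑ i : Fin 3, ∫ u, ∑ j : Fin 3,
              LandauKernel (v - u) i j * globalMaxwellian u * (w i * w j) := by
            refine Finset.sum_congr rfl (fun i _ => ?_)
            simp_rw [h1 i]
            exact (integral_finset_sum _ (fun j _ => hint i j)).symm
        _ = ∫ u, g u := by
            rw [← integral_finset_sum _
              (fun i _ => integrable_finset_sum _ (fun j _ => hint i j))]
    rw [hstep]
    have hnonneg : 0 ≤ g := by
      intro u
      rw [hg]
      simp only
      rw [landauAux.quad_form]
      by_cases hz : v - u = 0
      · simp [hz]
      · rw [if_neg hz]
        have h1 : 0 ≤ ‖v - u‖⁻¹ := inv_nonneg.2 (norm_nonneg _)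
        have h2 := (landauAux.maxwell_pos u).le
        have h3 := landauAux.CS (v - u) w hz
        have : 0 ≤ (∑ i, (w i) ^ 2) - (∑ i, (v - u) i * w i) ^ 2 / ‖v - u‖ ^ 2 := by linarith
        positivity
    rw [integral_pos_iff_support_of_nonneg hnonneg hgint]
    -- the complement of the support is contained in a null set
    have hsubset : (Function.support g)ᶜ ⊆ (fun u : EuclideanSpace ℝ (Fin 3) => v - u) ⁻¹'
        ((Submodule.span ℝ {w} : Submodule ℝ (EuclideanSpace ℝ (Fin 3))) : Set _) := by
      intro u hu
      have hgu : g u = 0 := Function.notMem_support.1 hu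
      simp only [Set.mem_preimage, SetLike.mem_coe]
      by_cases hz : v - u = 0
      · rw [hz]; exact Submodule.zero_mem _
      · rw [hg] at hgu
        simp only at hgu
        rw [landauAux.quad_form, if_neg hz] at hgu
        have h1 : ‖v - u‖⁻¹ ≠ 0 := inv_ne_zero (norm_ne_zero_iff.2 hz)
        have h2 : globalMaxwellian u ≠ 0 := (landauAux.maxwell_pos u).ne'
        have h3 : (∑ i, (w i) ^ 2) - (∑ i, (v - u) i * w i) ^ 2 / ‖v - u‖ ^ 2 = 0 := by
          rcases mul_eq_zero.1 hgu with h | h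
          · rcases mul_eq_zero.1 h with h' | h'
            · exact absurd h' h1
            · exact absurd h' h2
          · exact h
        -- equality case of Cauchy–Schwarz
        have hn : (0:ℝ) < ‖v - u‖ ^ 2 := pow_pos (norm_pos_iff.2 hz) 2
        have h4 : (∑ i, (v - u) i * w i) ^ 2 = ‖w‖ ^ 2 * ‖v - u‖ ^ 2 := by
          have := sub_eq_zero.1 h3
          rw [eq_comm, div_eq_iff hn.ne'] at this
          rw [this, landauAux.sum_sq_eq]
        have h5 : ⟪w, v - u⟫ ^ 2 = (‖w‖ * ‖v - u‖) ^ 2 := by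
          rw [real_inner_comm, landauAux.euclInnerSum, h4]
          ring
        have h6 : ‖⟪w, v - u⟫‖ = ‖w‖ * ‖v - u‖ := by
          rw [Real.norm_eq_abs, ← Real.sqrt_sq_eq_abs, h5,
            Real.sqrt_sq (by positivity)]
        obtain ⟨r, _, hr⟩ := (norm_inner_eq_norm_iff hw hz).1 h6
        rw [Submodule.mem_span_singleton]
        exact ⟨r, hr.symm⟩
    have hnull : volume ((Function.support g)ᶜ) = 0 :=
      measure_mono_null hsubset (landauAux.preimage_null v w hw)
    -- hence the support has positive measure
    by_contra hpos
    push_neg at hpos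
    have hs0 : volume (Function.support g) = 0 := le_antisymm hpos zero_le
    have huniv : volume (Set.univ : Set (EuclideanSpace ℝ (Fin 3))) = 0 := by
      have := measure_union_le (μ := volume) (Function.support g) (Function.support g)ᶜ
      rw [Set.union_compl_self, hs0, hnull] at this
      simp only [add_zero] at this
      exact le_antisymm this zero_le
    exact ((isOpen_univ.measure_pos volume Set.univ_nonempty).ne' huniv)
end

section
/- There exist constants c > 0 and r ∈ (0,1) such that the following holds: for all x₁, x₂ > 0 with |x₁ − 1| < r and |x₂ − 1| < r, all θ̄ ∈ [1, 3], all Δ ∈ ℝ, all β > 0 and all γ ∈ ℝ with γ² ≤ (1/4)·θ̄·β², one has (3/2)·β·Δ² + (2/3)·θ̄·β·Ψ(x₁) + θ̄·β·Ψ(x₂) + (3/2)·γ·Δ·((2/3)·ln x₁ + ln x₂) ≥ c·β·((x₁ − 1)² + Δ² + (x₂ − 1)²). -/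
set_option maxHeartbeats 800000

lemma psi_lb_s18 {x : ℝ} (hx : 0 < x) (h1 : 9/10 ≤ x) (h2 : x ≤ 11/10) :
    7/20 * (x - 1)^2 ≤ Ψ x := by
  set y := Real.sqrt (Real.sqrt x) with hy
  have hy0 : 0 < y := Real.sqrt_pos.mpr (Real.sqrt_pos.mpr hx)
  have hy2 : y^2 = Real.sqrt x := Real.sq_sqrt (Real.sqrt_nonneg x)
  have hy4 : y^4 = x := by
    have : (y^2)^2 = x := by rw [hy2]; exact Real.sq_sqrt hx.le
    nlinarith [this]
  have hlog : Real.log x = 4 * Real.log y := by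
    rw [← hy4]; rw [Real.log_pow]; push_cast; ring
  have hly : Real.log y ≤ y - 1 := Real.log_le_sub_one_of_pos hy0
  have hyub : y ≤ 41/40 := by nlinarith [hy4, sq_nonneg y, sq_nonneg (y - 41/40), sq_nonneg (y^2 - (41/40)^2)]
  have hylb : 97/100 ≤ y := by nlinarith [hy4, sq_nonneg y, sq_nonneg (y - 97/100), sq_nonneg (y^2 - (97/100)^2)]
  have key : 7/20 * (y^4 - 1)^2 ≤ y^4 - 4*y + 3 := by
    nlinarith [sq_nonneg (y-1), mul_nonneg (sub_nonneg.2 hylb) (sub_nonneg.2 hyub), sq_nonneg (y^2-1), sq_nonneg ((y-1)*(y+1)), mul_nonneg (mul_nonneg (sub_nonneg.2 hylb) (sub_nonneg.2 hyub)) (sq_nonneg (y-1))]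
  unfold Ψ
  rw [hlog, ← hy4]
  nlinarith [key, hly]

lemma log_sq_lb {x : ℝ} (hx : 0 < x) (h1 : 9/10 ≤ x) (h2 : x ≤ 11/10) :
    (Real.log x)^2 ≤ 36/25 * (x - 1)^2 := by
  have hub : Real.log x ≤ x - 1 := Real.log_le_sub_one_of_pos hx
  rcases le_total 1 x with h | h
  · have h0 : 0 ≤ Real.log x := Real.log_nonneg h
    nlinarith [hub, h0]
  · have h0 : Real.log x ≤ 0 := Real.log_nonpos hx.le h
    have hlb : (x - 1) / x ≤ Real.log x := by
      have h' := Real.log_le_sub_one_of_pos (inv_pos.mpr hx)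
      rw [Real.log_inv] at h'
      have hxne : x ≠ 0 := ne_of_gt hx
      calc (x - 1)/x = 1 - x⁻¹ := by field_simp
        _ ≤ Real.log x := by linarith
    have h9 : (10/9) * (x - 1) ≤ (x - 1) / x := by
      rw [le_div_iff₀ hx]
      nlinarith [mul_nonneg (by linarith : (0:ℝ) ≤ 1 - x) (by linarith : (0:ℝ) ≤ (10/9)*x - 1)]
    nlinarith [hlb, h0, h9]

/-- Algebraic core of the entropy–entropy flux lower bound along the rarefaction
wave: there exist `c > 0` and `r ∈ (0,1)` such that for all `x₁, x₂ > 0` within `r`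
of `1`, all `θ̄ ∈ [1,3]`, `Δ ∈ ℝ`, `β > 0` and `γ` with `γ² ≤ (1/4)θ̄β²`,
`(3/2)βΔ² + (2/3)θ̄βΨ(x₁) + θ̄βΨ(x₂) + (3/2)γΔ((2/3)ln x₁ + ln x₂)
  ≥ cβ((x₁−1)² + Δ² + (x₂−1)²)`. -/
theorem entropy_flux_lower_bound_core :
    ∃ c : ℝ, 0 < c ∧ ∃ r : ℝ, 0 < r ∧ r < 1 ∧
      ∀ x₁ x₂ : ℝ, 0 < x₁ → 0 < x₂ → |x₁ - 1| < r → |x₂ - 1| < r →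
      ∀ θb : ℝ, θb ∈ Set.Icc (1 : ℝ) 3 →
      ∀ Δ β γ : ℝ, 0 < β → γ ^ 2 ≤ 1 / 4 * θb * β ^ 2 →
        c * β * ((x₁ - 1) ^ 2 + Δ ^ 2 + (x₂ - 1) ^ 2)
          ≤ 3 / 2 * β * Δ ^ 2 + 2 / 3 * θb * β * Ψ x₁ + θb * β * Ψ x₂
            + 3 / 2 * γ * Δ * (2 / 3 * Real.log x₁ + Real.log x₂) := by
  refine ⟨1/24, by norm_num, 1/10, by norm_num, by norm_num, ?_⟩
  intro x₁ x₂ hx₁ hx₂ hr₁ hr₂ θb hθ Δ β γ hβ hγ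
  obtain ⟨hθ1, hθ3⟩ := hθ
  rw [abs_lt] at hr₁ hr₂
  have hb₁ : 9/10 ≤ x₁ := by linarith [hr₁.1]
  have hb₁' : x₁ ≤ 11/10 := by linarith [hr₁.2]
  have hb₂ : 9/10 ≤ x₂ := by linarith [hr₂.1]
  have hb₂' : x₂ ≤ 11/10 := by linarith [hr₂.2]
  have hΨ₁ := psi_lb_s18 hx₁ hb₁ hb₁'
  have hΨ₂ := psi_lb_s18 hx₂ hb₂ hb₂'
  have hl₁ := log_sq_lb hx₁ hb₁ hb₁'
  have hl₂ := log_sq_lb hx₂ hb₂ hb₂'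
  set a := x₁ - 1 with ha
  set b := x₂ - 1 with hb
  set l₁ := Real.log x₁ with hll₁
  set l₂ := Real.log x₂ with hll₂
  clear_value a b l₁ l₂
  set L := 2/3 * l₁ + l₂ with hL
  clear_value L
  -- cross term bound: β*γ*Δ*L ≥ -(4/5)β²Δ² - (5/16)γ²L²
  have hcross : -(4/5)*β^2*Δ^2 - 5/16*(γ^2*L^2) ≤ β*(γ*Δ*L) := by
    nlinarith [sq_nonneg (4*β*Δ + 5/2*(γ*L))]
  -- γ²L² ≤ (1/4)θβ²L²
  have hgl : γ^2*L^2 ≤ 1/4*θb*β^2*L^2 := by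
    nlinarith [mul_le_mul_of_nonneg_right hγ (sq_nonneg L)]
  -- L² ≤ (8/5)a² + (12/5)b²
  have hL2 : L^2 ≤ 8/5*a^2 + 12/5*b^2 := by
    have hLsq : L^2 = 4/9*l₁^2 + 4/3*(l₁*l₂) + l₂^2 := by rw [hL]; ring
    nlinarith [sq_nonneg (l₁ - l₂), hl₁, hl₂, hLsq]
  have hL2' : 1/4*θb*β^2*L^2 ≤ 1/4*θb*β^2*(8/5*a^2 + 12/5*b^2) := by
    have h0 : (0:ℝ) ≤ 1/4*θb*β^2 := by positivity
    exact mul_le_mul_of_nonneg_left hL2 h0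
  have hθβ2 : (0:ℝ) ≤ θb*β^2 := by positivity
  have hP₁ : θb*β^2*(7/20*a^2) ≤ θb*β^2*(Ψ x₁) := mul_le_mul_of_nonneg_left hΨ₁ hθβ2
  have hP₂ : θb*β^2*(7/20*b^2) ≤ θb*β^2*(Ψ x₂) := mul_le_mul_of_nonneg_left hΨ₂ hθβ2
  rw [← mul_le_mul_iff_right₀ hβ]
  have hθa : 0 ≤ (θb - 1)*(β^2*a^2) := mul_nonneg (by linarith) (by positivity)
  have hθb : 0 ≤ (θb - 1)*(β^2*b^2) := mul_nonneg (by linarith) (by positivity)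
  nlinarith [hcross, hgl, hL2', hP₁, hP₂, hθa, hθb, sq_nonneg (β*Δ), sq_nonneg (β*a), sq_nonneg (β*b)]
end
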